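/- Let G = G₀(u) ⋄ H(u) be a connected k-uniform hypergraph (k even) with H odd-bipartite, and let x be a first eigenvector of G with x_u = 0. Then ∑_{e ∈ E_{G₀}(u)} ∏_{v ∈ e\{u}} x_v = 0 and ∏_{v ∈ e\{u}} x_v = 0 for every edge e ∈ E_H(u). -/

import Mathlib

open Finset

structure UHG (V : Type) [DecidableEq V] [Fintype V] (k : ℕ) where
  edges : Finset (Finset V)
  uniform : ∀ e ∈ edges, e.card = k

namespace UHG

variable {V : Type} [DecidableEq V] [Fintype V] {k : ℕ}

/-- The vertices of the hypergraph: all vertices covered by some edge. -/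
def verts (G : UHG V k) : Finset V := G.edges.biUnion id

/-- The set of edges containing a given vertex. -/
def incEdges (G : UHG V k) (v : V) : Finset (Finset V) :=
  G.edges.filter fun e => v ∈ e

/-- The degree of a vertex. -/
def deg (G : UHG V k) (v : V) : ℕ := (G.incEdges v).card

/-- Two vertices are adjacent if some edge contains both. -/
def Adj (G : UHG V k) (u v : V) : Prop := ∃ e ∈ G.edges, u ∈ e ∧ v ∈ e

/-- A hypergraph is connected if any two of its vertices are joined by a walk. -/
def Connected (G : UHG V k) : Prop :=
  G.verts.Nonempty ∧ ∀ u ∈ G.verts, ∀ v ∈ G.verts, Relation.ReflTransGen G.Adj u v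

/-- A hypergraph is odd-bipartite if there is a set `U` of vertices such that
every edge meets `U` in an odd number of vertices (the bipartition is `{U, V \ U}`). -/
def OddBipartite (G : UHG V k) : Prop :=
  ∃ U : Finset V, ∀ e ∈ G.edges, Odd (e ∩ U).card

/-- The signless Laplacian form `Q(G) x^k = ∑_{e ∈ E} (∑_{v∈e} x_v^k + k ∏_{v∈e} x_v)`. -/
def Qform (G : UHG V k) (x : V → ℝ) : ℝ :=
  ∑ e ∈ G.edges, ((∑ v ∈ e, x v ^ k) + (k : ℝ) * ∏ v ∈ e, x v)

/-- The H-eigenvector equation for the signless Laplacian tensor: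
`(λ - d(v)) x_v^{k-1} = ∑_{e ∋ v} ∏_{w ∈ e \ {v}} x_w` for every vertex `v`. -/
def eigenEq (G : UHG V k) (lam : ℝ) (x : V → ℝ) : Prop :=
  ∀ v : V, (lam - (G.deg v : ℝ)) * x v ^ (k - 1) =
    ∑ e ∈ G.incEdges v, ∏ w ∈ e.erase v, x w

/-- The least H-eigenvalue of the signless Laplacian tensor. -/
noncomputable def lamMin (G : UHG V k) : ℝ :=
  sInf {lam : ℝ | ∃ x : V → ℝ, x ≠ 0 ∧ G.eigenEq lam x}

/-- A first eigenvector: an H-eigenvector associated with the least H-eigenvalue. -/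
def IsFirstEigenvector (G : UHG V k) (x : V → ℝ) : Prop :=
  x ≠ 0 ∧ G.eigenEq G.lamMin x

/-- `G` is the coalescence `G₀(u) ⋄ H(u)`: its edges are the disjoint union of the
edges of `G₀` and `H`, which share only the vertex `u`. -/
def IsCoalescence (G G₀ H : UHG V k) (u : V) : Prop :=
  G.edges = G₀.edges ∪ H.edges ∧ Disjoint G₀.edges H.edges ∧
  G₀.verts ∩ H.verts ⊆ {u} ∧ u ∈ G₀.verts ∧ u ∈ H.verts

end UHG


namespace UHG

variable {V : Type} [DecidableEq V] [Fintype V] {k : ℕ}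

/-- The `k`-th power sum `∑_v x_v^k`. -/
noncomputable def gs (k : ℕ) (x : V → ℝ) : ℝ := ∑ v, x v ^ k

/-- The contribution of a single edge to the signless Laplacian form. -/
noncomputable def eterm (k : ℕ) (y : V → ℝ) (e : Finset V) : ℝ :=
  (∑ v ∈ e, y v ^ k) + (k : ℝ) * ∏ v ∈ e, y v

lemma Qform_eq_sum (G : UHG V k) (y : V → ℝ) :
    G.Qform y = ∑ e ∈ G.edges, eterm k y e := rfl

lemma gs_update (x : V → ℝ) (j : V) (t : ℝ) :
    gs k (Function.update x j t) = gs k x + t ^ k - x j ^ k := by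
  classical
  unfold gs
  have h1 : ∑ v ∈ Finset.univ.erase j, Function.update x j t v ^ k
      = ∑ v ∈ Finset.univ.erase j, x v ^ k :=
    Finset.sum_congr rfl fun v hv => by
      rw [Function.update_of_ne (Finset.ne_of_mem_erase hv)]
  rw [← Finset.add_sum_erase Finset.univ (fun v => Function.update x j t v ^ k)
        (Finset.mem_univ j),
      ← Finset.add_sum_erase Finset.univ (fun v => x v ^ k) (Finset.mem_univ j),
      h1, Function.update_self]
  ring

lemma Qform_update (G : UHG V k) (x : V → ℝ) (j : V) (t : ℝ) :
    G.Qform (Function.update x j t)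
      = G.Qform x + (G.deg j : ℝ) * (t ^ k - x j ^ k)
        + (k : ℝ) * (t - x j) * ∑ e ∈ G.incEdges j, ∏ w ∈ e.erase j, x w := by
  classical
  have key : ∀ e ∈ G.edges,
      eterm k (Function.update x j t) e
        = eterm k x e + (if j ∈ e then
            (t ^ k - x j ^ k) + (k : ℝ) * (t - x j) * ∏ w ∈ e.erase j, x w else 0) := by
    intro e he
    by_cases hj : j ∈ e
    · have hupd : ∀ v ∈ e.erase j, Function.update x j t v = x v := fun v hv =>
        Function.update_of_ne (Finset.ne_of_mem_erase hv) _ _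
      have hsum : ∑ v ∈ e, Function.update x j t v ^ k
          = t ^ k + ∑ v ∈ e.erase j, x v ^ k := by
        rw [← Finset.add_sum_erase e (fun v => Function.update x j t v ^ k) hj,
            Function.update_self]
        congr 1
        exact Finset.sum_congr rfl fun v hv => by rw [hupd v hv]
      have hsum' : ∑ v ∈ e, x v ^ k = x j ^ k + ∑ v ∈ e.erase j, x v ^ k :=
        (Finset.add_sum_erase e (fun v => x v ^ k) hj).symm
      have hprod : ∏ v ∈ e, Function.update x j t v = t * ∏ v ∈ e.erase j, x v := by
        rw [← Finset.mul_prod_erase e (fun v => Function.update x j t v) hj,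
            Function.update_self]
        congr 1
        exact Finset.prod_congr rfl fun v hv => by rw [hupd v hv]
      have hprod' : ∏ v ∈ e, x v = x j * ∏ v ∈ e.erase j, x v :=
        (Finset.mul_prod_erase e x hj).symm
      rw [if_pos hj]
      unfold eterm
      rw [hsum, hsum', hprod, hprod']
      ring
    · have hupd : ∀ v ∈ e, Function.update x j t v = x v := fun v hv =>
        Function.update_of_ne (fun h => hj (by rw [← h]; exact hv)) _ _
      rw [if_neg hj, add_zero]
      unfold eterm
      rw [Finset.sum_congr rfl fun v hv => by rw [hupd v hv],
          Finset.prod_congr rfl fun v hv => by rw [hupd v hv]]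
  rw [Qform_eq_sum, Qform_eq_sum, Finset.sum_congr rfl key, Finset.sum_add_distrib,
      Finset.sum_ite, Finset.sum_const_zero, add_zero, Finset.sum_add_distrib,
      Finset.sum_const, nsmul_eq_mul, Finset.mul_sum]
  have hfilter : Finset.filter (fun e => j ∈ e) G.edges = G.incEdges j := rfl
  rw [hfilter]
  simp only [deg]
  ring

lemma gs_smul (c : ℝ) (z : V → ℝ) : gs k (c • z) = c ^ k * gs k z := by
  unfold gs
  rw [Finset.mul_sum]
  exact Finset.sum_congr rfl fun v _ => by
    simp [Pi.smul_apply, smul_eq_mul, mul_pow]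

lemma Qform_smul (G : UHG V k) (c : ℝ) (z : V → ℝ) :
    G.Qform (c • z) = c ^ k * G.Qform z := by
  unfold Qform
  rw [Finset.mul_sum]
  refine Finset.sum_congr rfl fun e he => ?_
  have h1 : ∑ v ∈ e, (c • z) v ^ k = c ^ k * ∑ v ∈ e, z v ^ k := by
    rw [Finset.mul_sum]
    exact Finset.sum_congr rfl fun v _ => by
      simp [Pi.smul_apply, smul_eq_mul, mul_pow]
  have h2 : ∏ v ∈ e, (c • z) v = c ^ k * ∏ v ∈ e, z v := by
    calc ∏ v ∈ e, (c • z) v = ∏ v ∈ e, (c * z v) := rfl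
      _ = (∏ _v ∈ e, c) * ∏ v ∈ e, z v := Finset.prod_mul_distrib
      _ = c ^ k * ∏ v ∈ e, z v := by rw [Finset.prod_const, G.uniform e he]
  rw [h1, h2]
  ring

lemma gs_pos (hk : Even k) {x : V → ℝ} (hx : x ≠ 0) : 0 < gs k x := by
  obtain ⟨j, hj⟩ : ∃ j, x j ≠ 0 := by
    by_contra h
    push_neg at h
    exact hx (funext h)
  exact Finset.sum_pos' (fun v _ => hk.pow_nonneg _)
    ⟨j, Finset.mem_univ j, hk.pow_pos hj⟩

lemma rayleigh (hk0 : 0 < k) (G : UHG V k) (μ : ℝ) (y : V → ℝ)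
    (h : G.eigenEq μ y) : μ * gs k y = G.Qform y := by
  classical
  have h2 : ∑ j, (μ - (G.deg j : ℝ)) * y j ^ (k - 1) * y j
      = ∑ j, (∑ e ∈ G.incEdges j, ∏ w ∈ e.erase j, y w) * y j :=
    Finset.sum_congr rfl fun j _ => by rw [h j]
  have hpow : ∀ j : V, y j ^ (k - 1) * y j = y j ^ k := fun j => by
    rw [← pow_succ, Nat.sub_add_cancel hk0]
  have hL : ∑ j, (μ - (G.deg j : ℝ)) * y j ^ (k - 1) * y j
      = μ * gs k y - ∑ e ∈ G.edges, ∑ v ∈ e, y v ^ k := by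
    have e1 : ∀ j : V, (μ - (G.deg j : ℝ)) * y j ^ (k - 1) * y j
        = μ * y j ^ k - (G.deg j : ℝ) * y j ^ k := fun j => by
      rw [mul_assoc, hpow j]; ring
    rw [Finset.sum_congr rfl fun j _ => e1 j, Finset.sum_sub_distrib]
    congr 1
    · unfold gs; rw [Finset.mul_sum]
    · have e2 : ∀ j : V, (G.deg j : ℝ) * y j ^ k
          = ∑ e ∈ G.edges, if j ∈ e then y j ^ k else 0 := by
        intro j
        rw [Finset.sum_ite, Finset.sum_const_zero, add_zero, Finset.sum_const,
            nsmul_eq_mul]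
        rfl
      rw [Finset.sum_congr rfl fun j _ => e2 j, Finset.sum_comm]
      refine Finset.sum_congr rfl fun e _ => ?_
      rw [Finset.sum_ite_mem, Finset.univ_inter]
  have hR : ∑ j, (∑ e ∈ G.incEdges j, ∏ w ∈ e.erase j, y w) * y j
      = ∑ e ∈ G.edges, (k : ℝ) * ∏ v ∈ e, y v := by
    have e2 : ∀ j : V, (∑ e ∈ G.incEdges j, ∏ w ∈ e.erase j, y w) * y j
        = ∑ e ∈ G.edges, if j ∈ e then ∏ v ∈ e, y v else 0 := by
      intro j
      rw [Finset.sum_mul]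
      unfold incEdges
      rw [Finset.sum_filter]
      refine Finset.sum_congr rfl fun e _ => ?_
      by_cases hj : j ∈ e
      · rw [if_pos hj, if_pos hj, mul_comm, Finset.mul_prod_erase e y hj]
      · rw [if_neg hj, if_neg hj]
    rw [Finset.sum_congr rfl fun j _ => e2 j, Finset.sum_comm]
    refine Finset.sum_congr rfl fun e he => ?_
    rw [Finset.sum_ite_mem, Finset.univ_inter, Finset.sum_const, nsmul_eq_mul,
        G.uniform e he]
  rw [hL, hR] at h2
  unfold Qform
  rw [Finset.sum_add_distrib]
  linarith

lemma eigen_of_min (hk0 : 0 < k) (G : UHG V k) (m : ℝ) (v : V → ℝ)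
    (hmin : ∀ z : V → ℝ, m * gs k z ≤ G.Qform z)
    (heq : G.Qform v = m * gs k v) : G.eigenEq m v := by
  classical
  intro j
  have hkR : (k : ℝ) ≠ 0 := Nat.cast_ne_zero.mpr hk0.ne'
  set P : ℝ := ∑ e ∈ G.incEdges j, ∏ w ∈ e.erase j, v w with hPdef
  have key : ∀ t : ℝ,
      ((G.deg j : ℝ) - m) * v j ^ k + ((k : ℝ) * P) * v j
        ≤ ((G.deg j : ℝ) - m) * t ^ k + ((k : ℝ) * P) * t := by
    intro t
    have h1 := hmin (Function.update v j t)
    rw [Qform_update, gs_update, heq, ← hPdef] at h1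
    nlinarith [h1]
  have hloc : IsLocalMin
      (fun s : ℝ => ((G.deg j : ℝ) - m) * s ^ k + ((k : ℝ) * P) * s) (v j) :=
    Filter.Eventually.of_forall key
  have hder : HasDerivAt
      (fun s : ℝ => ((G.deg j : ℝ) - m) * s ^ k + ((k : ℝ) * P) * s)
      (((G.deg j : ℝ) - m) * ((k : ℝ) * v j ^ (k - 1)) + ((k : ℝ) * P) * 1) (v j) :=
    (HasDerivAt.const_mul _ (hasDerivAt_pow k (v j))).add
      (HasDerivAt.const_mul _ (hasDerivAt_id (v j)))
  have hz : ((G.deg j : ℝ) - m) * ((k : ℝ) * v j ^ (k - 1)) + ((k : ℝ) * P) * 1 = 0 := by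
    rw [← hder.deriv]
    exact hloc.deriv_eq_zero
  have h2 : (k : ℝ) * (((G.deg j : ℝ) - m) * v j ^ (k - 1) + P) = 0 := by
    linear_combination hz
  have h3 := (mul_eq_zero.mp h2).resolve_left hkR
  linear_combination (-1 : ℝ) * h3

lemma exists_min (hk : Even k) (hk0 : 0 < k) (u₀ : V) (G : UHG V k) :
    ∃ m : ℝ, (∀ z : V → ℝ, m * gs k z ≤ G.Qform z) ∧
      ∃ v : V → ℝ, v ≠ 0 ∧ G.eigenEq m v := by
  classical
  set S : Set (V → ℝ) := {z | gs k z = 1} with hS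
  have hcont_gs : Continuous (gs k : (V → ℝ) → ℝ) := by
    unfold gs
    exact continuous_finset_sum _ fun v _ => (continuous_apply v).pow k
  have hcont_Q : Continuous G.Qform := by
    unfold Qform
    exact continuous_finset_sum _ fun e _ =>
      ((continuous_finset_sum _ fun v _ => (continuous_apply v).pow k).add
        (continuous_const.mul (continuous_finset_prod _ fun v _ => continuous_apply v)))
  have hclosed : IsClosed S := isClosed_eq hcont_gs continuous_const
  have hbdd : Bornology.IsBounded S := by
    refine (Metric.isBounded_iff_subset_closedBall 0).mpr ⟨1, fun z hz => ?_⟩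
    have hz1 : gs k z = 1 := hz
    rw [Metric.mem_closedBall, dist_pi_le_iff (by norm_num : (0 : ℝ) ≤ 1)]
    intro v
    have h1 : z v ^ k ≤ 1 := by
      have h := Finset.single_le_sum (f := fun w => z w ^ k)
        (fun w _ => hk.pow_nonneg _) (Finset.mem_univ v)
      unfold gs at hz1
      linarith
    have h2 : |z v| ^ k ≤ 1 := by
      rw [pow_abs, abs_of_nonneg (hk.pow_nonneg _)]
      exact h1
    have h3 : |z v| ≤ 1 :=
      (pow_le_one_iff_of_nonneg (abs_nonneg _) hk0.ne').mp h2
    simpa [Real.dist_eq] using h3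
  have hcomp : IsCompact S := Metric.isCompact_of_isClosed_isBounded hclosed hbdd
  have hne : S.Nonempty := by
    refine ⟨fun v => if v = u₀ then 1 else 0, ?_⟩
    show gs k _ = 1
    unfold gs
    rw [Finset.sum_eq_single u₀]
    · simp
    · intro b _ hb
      simp [hb, zero_pow hk0.ne']
    · intro h
      exact absurd (Finset.mem_univ u₀) h
  obtain ⟨v₀, hv₀S, hv₀min⟩ := hcomp.exists_isMinOn hne hcont_Q.continuousOn
  have hv₀gs : gs k v₀ = 1 := hv₀S
  refine ⟨G.Qform v₀, ?_, v₀, ?_, ?_⟩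
  · intro z
    by_cases hz : z = 0
    · subst hz
      have hQ0 : G.Qform (0 : V → ℝ) = 0 := by
        unfold Qform
        refine Finset.sum_eq_zero fun e he => ?_
        have hnee : e.Nonempty :=
          Finset.card_pos.mp (by rw [G.uniform e he]; exact hk0)
        obtain ⟨j, hj⟩ := hnee
        rw [Finset.prod_eq_zero hj rfl]
        simp [zero_pow hk0.ne']
      have hg0 : gs k (0 : V → ℝ) = 0 := by
        unfold gs; simp [zero_pow hk0.ne']
      rw [hQ0, hg0, mul_zero]
    · have hgz : 0 < gs k z := gs_pos hk hz
      set c : ℝ := (gs k z)⁻¹ ^ ((k : ℝ)⁻¹) with hcdef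
      have hck : c ^ k = (gs k z)⁻¹ := by
        rw [hcdef, ← Real.rpow_natCast ((gs k z)⁻¹ ^ ((k : ℝ)⁻¹)) k,
            ← Real.rpow_mul (inv_pos.mpr hgz).le,
            inv_mul_cancel₀ (Nat.cast_ne_zero.mpr hk0.ne' : (k : ℝ) ≠ 0),
            Real.rpow_one]
      have hmem : c • z ∈ S := by
        show gs k (c • z) = 1
        rw [gs_smul, hck, inv_mul_cancel₀ hgz.ne']
      have h3 : G.Qform v₀ ≤ G.Qform (c • z) := hv₀min hmem
      rw [Qform_smul, hck] at h3
      have h4 : (G.Qform v₀) * gs k z ≤ ((gs k z)⁻¹ * G.Qform z) * gs k z :=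
        mul_le_mul_of_nonneg_right h3 hgz.le
      calc G.Qform v₀ * gs k z ≤ ((gs k z)⁻¹ * G.Qform z) * gs k z := h4
        _ = G.Qform z := by field_simp
  · intro h0
    rw [h0] at hv₀gs
    have : gs k (0 : V → ℝ) = 0 := by unfold gs; simp [zero_pow hk0.ne']
    rw [this] at hv₀gs
    norm_num at hv₀gs
  · refine eigen_of_min hk0 G _ v₀ ?_ (by rw [hv₀gs, mul_one])
    intro z
    by_cases hz : z = 0
    · subst hz
      have hQ0 : G.Qform (0 : V → ℝ) = 0 := by
        unfold Qform
        refine Finset.sum_eq_zero fun e he => ?_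
        have hnee : e.Nonempty :=
          Finset.card_pos.mp (by rw [G.uniform e he]; exact hk0)
        obtain ⟨j, hj⟩ := hnee
        rw [Finset.prod_eq_zero hj rfl]
        simp [zero_pow hk0.ne']
      have hg0 : gs k (0 : V → ℝ) = 0 := by
        unfold gs; simp [zero_pow hk0.ne']
      rw [hQ0, hg0, mul_zero]
    · have hgz : 0 < gs k z := gs_pos hk hz
      set c : ℝ := (gs k z)⁻¹ ^ ((k : ℝ)⁻¹) with hcdef
      have hck : c ^ k = (gs k z)⁻¹ := by
        rw [hcdef, ← Real.rpow_natCast ((gs k z)⁻¹ ^ ((k : ℝ)⁻¹)) k,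
            ← Real.rpow_mul (inv_pos.mpr hgz).le,
            inv_mul_cancel₀ (Nat.cast_ne_zero.mpr hk0.ne' : (k : ℝ) ≠ 0),
            Real.rpow_one]
      have hmem : c • z ∈ S := by
        show gs k (c • z) = 1
        rw [gs_smul, hck, inv_mul_cancel₀ hgz.ne']
      have h3 : G.Qform v₀ ≤ G.Qform (c • z) := hv₀min hmem
      rw [Qform_smul, hck] at h3
      have h4 : (G.Qform v₀) * gs k z ≤ ((gs k z)⁻¹ * G.Qform z) * gs k z :=
        mul_le_mul_of_nonneg_right h3 hgz.le
      calc G.Qform v₀ * gs k z ≤ ((gs k z)⁻¹ * G.Qform z) * gs k z := h4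
        _ = G.Qform z := by field_simp

end UHG

/-- Let `G = G₀(u) ⋄ H(u)` be a connected `k`-uniform hypergraph (`k` even)
with `H` odd-bipartite, and let `x` be a first eigenvector of `G` with `x_u = 0`. Then
`∑_{e ∈ E_{G₀}(u)} ∏_{v ∈ e \ {u}} x_v = 0`, and `∏_{v ∈ e \ {u}} x_v = 0` for every
edge `e ∈ E_H(u)`. -/
theorem stmt9 {V : Type} [DecidableEq V] [Fintype V] {k : ℕ}
    (hk : Even k) (hk0 : 0 < k) (G G₀ H : UHG V k) (u : V)
    (hcoal : UHG.IsCoalescence G G₀ H u) (hH : H.OddBipartite) (hconn : G.Connected)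
    (x : V → ℝ) (hx : G.IsFirstEigenvector x) (hxu : x u = 0) :
    (∑ e ∈ G₀.incEdges u, ∏ w ∈ e.erase u, x w) = 0 ∧
      ∀ e ∈ H.incEdges u, (∏ w ∈ e.erase u, x w) = 0 := by
  classical
  obtain ⟨hxne, hxeig⟩ := hx
  obtain ⟨hedges, hdisj, hinter, huG₀, huH⟩ := hcoal
  obtain ⟨U, hU⟩ := hH
  have hk2 : 2 ≤ k := by
    obtain ⟨c, hc⟩ := hk
    omega
  have hk1 : k - 1 ≠ 0 := by omega
  -- the variational characterization of lamMin
  obtain ⟨m, hmF, v₀, hv₀ne, hv₀eig⟩ := UHG.exists_min hk hk0 u G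
  have hlam : G.lamMin = m := by
    have hlb : ∀ μ ∈ {lam : ℝ | ∃ y : V → ℝ, y ≠ 0 ∧ G.eigenEq lam y}, m ≤ μ := by
      rintro μ ⟨y, hy0, hyeig⟩
      have h1 := UHG.rayleigh hk0 G μ y hyeig
      have h2 := hmF y
      have h3 := UHG.gs_pos hk hy0
      nlinarith
    have hmS : m ∈ {lam : ℝ | ∃ y : V → ℝ, y ≠ 0 ∧ G.eigenEq lam y} :=
      ⟨v₀, hv₀ne, hv₀eig⟩
    exact le_antisymm (csInf_le ⟨m, hlb⟩ hmS) (le_csInf ⟨m, hmS⟩ hlb)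
  have hQx : G.Qform x = m * UHG.gs k x := by
    rw [← hlam]
    exact (UHG.rayleigh hk0 G _ x hxeig).symm
  -- split x into its H part and the rest
  set wH : V → ℝ := fun j => if j ∈ H.verts \ {u} then x j else 0 with hwH
  set xG : V → ℝ := fun j => if j ∈ H.verts \ {u} then 0 else x j with hxG
  have hwH_mem : ∀ j, j ∈ H.verts \ {u} → wH j = x j := by
    intro j hj
    rw [hwH]
    show (if j ∈ H.verts \ {u} then x j else 0) = x j
    exact if_pos hj
  have hwH_not : ∀ j, j ∉ H.verts \ {u} → wH j = 0 := by
    intro j hj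
    rw [hwH]
    show (if j ∈ H.verts \ {u} then x j else 0) = 0
    exact if_neg hj
  have hxG_mem : ∀ j, j ∈ H.verts \ {u} → xG j = 0 := by
    intro j hj
    rw [hxG]
    show (if j ∈ H.verts \ {u} then 0 else x j) = 0
    exact if_pos hj
  have hxG_not : ∀ j, j ∉ H.verts \ {u} → xG j = x j := by
    intro j hj
    rw [hxG]
    show (if j ∈ H.verts \ {u} then 0 else x j) = x j
    exact if_neg hj
  have hunotmem : u ∉ H.verts \ {u} := by simp
  have hG₀v : ∀ e ∈ G₀.edges, ∀ j ∈ e, j ∉ H.verts \ {u} := by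
    intro e he j hj hmem
    have hjG : j ∈ G₀.verts := Finset.mem_biUnion.mpr ⟨e, he, hj⟩
    obtain ⟨hjH, hju⟩ := Finset.mem_sdiff.mp hmem
    exact hju (hinter (Finset.mem_inter.mpr ⟨hjG, hjH⟩))
  have hHvw : ∀ e ∈ H.edges, ∀ j ∈ e, wH j = x j := by
    intro e he j hj
    have hjH : j ∈ H.verts := Finset.mem_biUnion.mpr ⟨e, he, hj⟩
    by_cases hju : j = u
    · subst hju
      rw [hwH_not j hunotmem, hxu]
    · have hmem : j ∈ H.verts \ {u} := Finset.mem_sdiff.mpr ⟨hjH, by simp [hju]⟩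
      exact hwH_mem j hmem
  have hHvx : ∀ e ∈ H.edges, ∀ j ∈ e, xG j = 0 := by
    intro e he j hj
    have hjH : j ∈ H.verts := Finset.mem_biUnion.mpr ⟨e, he, hj⟩
    by_cases hju : j = u
    · subst hju
      rw [hxG_not j hunotmem, hxu]
    · have hmem : j ∈ H.verts \ {u} := Finset.mem_sdiff.mpr ⟨hjH, by simp [hju]⟩
      exact hxG_mem j hmem
  have hzero_term : ∀ (y : V → ℝ) (e : Finset V), e.Nonempty → (∀ j ∈ e, y j = 0) →
      UHG.eterm k y e = 0 := by
    intro y e hne hz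
    have h1 : ∑ v ∈ e, y v ^ k = 0 :=
      Finset.sum_eq_zero fun v hv => by rw [hz v hv]; exact zero_pow hk0.ne'
    obtain ⟨j, hj⟩ := hne
    have h2 : ∏ v ∈ e, y v = 0 := Finset.prod_eq_zero hj (hz j hj)
    unfold UHG.eterm
    rw [h1, h2, mul_zero, add_zero]
  have hcongr_term : ∀ (y y' : V → ℝ) (e : Finset V), (∀ j ∈ e, y j = y' j) →
      UHG.eterm k y e = UHG.eterm k y' e := by
    intro y y' e hyy
    unfold UHG.eterm
    rw [Finset.sum_congr rfl fun v hv => by rw [hyy v hv],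
        Finset.prod_congr rfl fun v hv => by rw [hyy v hv]]
  have hne_edge : ∀ {G' : UHG V k} {e : Finset V}, e ∈ G'.edges → e.Nonempty := by
    intro G' e he
    exact Finset.card_pos.mp (by rw [G'.uniform e he]; exact hk0)
  have hsplitQ : ∀ y : V → ℝ,
      G.Qform y = ∑ e ∈ G₀.edges, UHG.eterm k y e + ∑ e ∈ H.edges, UHG.eterm k y e := by
    intro y
    rw [UHG.Qform_eq_sum, hedges, Finset.sum_union hdisj]
  have hQxG : G.Qform xG = ∑ e ∈ G₀.edges, UHG.eterm k x e := by
    rw [hsplitQ xG]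
    have h1 : ∑ e ∈ G₀.edges, UHG.eterm k xG e = ∑ e ∈ G₀.edges, UHG.eterm k x e :=
      Finset.sum_congr rfl fun e he => hcongr_term _ _ _ fun j hj =>
        hxG_not j (hG₀v e he j hj)
    have h2 : ∑ e ∈ H.edges, UHG.eterm k xG e = 0 :=
      Finset.sum_eq_zero fun e he => hzero_term _ _ (hne_edge he) (hHvx e he)
    rw [h1, h2, add_zero]
  have hQwH : G.Qform wH = ∑ e ∈ H.edges, UHG.eterm k x e := by
    rw [hsplitQ wH]
    have h1 : ∑ e ∈ G₀.edges, UHG.eterm k wH e = 0 :=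
      Finset.sum_eq_zero fun e he => hzero_term _ _ (hne_edge he) fun j hj =>
        hwH_not j (hG₀v e he j hj)
    have h2 : ∑ e ∈ H.edges, UHG.eterm k wH e = ∑ e ∈ H.edges, UHG.eterm k x e :=
      Finset.sum_congr rfl fun e he => hcongr_term _ _ _ fun j hj => hHvw e he j hj
    rw [h1, h2, zero_add]
  have hQsum : G.Qform x = G.Qform xG + G.Qform wH := by
    rw [hsplitQ x, hQxG, hQwH]
  have hgsum : UHG.gs k x = UHG.gs k xG + UHG.gs k wH := by
    unfold UHG.gs
    rw [← Finset.sum_add_distrib]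
    refine Finset.sum_congr rfl fun j _ => ?_
    by_cases hj : j ∈ H.verts \ {u}
    · rw [hxG_mem j hj, hwH_mem j hj, zero_pow hk0.ne', zero_add]
    · rw [hxG_not j hj, hwH_not j hj, zero_pow hk0.ne', add_zero]
  -- the H-part of x is itself a minimizer
  have hQwHeq : G.Qform wH = m * UHG.gs k wH := by
    have h1 := hmF xG
    have h2 := hmF wH
    have h3 : m * UHG.gs k x = m * UHG.gs k xG + m * UHG.gs k wH := by
      rw [hgsum]; ring
    linarith [hQx, hQsum]
  -- flip the signs of |wH| on the odd bipartition U
  set v' : V → ℝ := fun j => if j ∈ U then -|wH j| else |wH j| with hv'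
  have hv'_pos : ∀ j, j ∈ U → v' j = -|wH j| := by
    intro j hj
    rw [hv']
    show (if j ∈ U then -|wH j| else |wH j|) = -|wH j|
    exact if_pos hj
  have hv'_neg : ∀ j, j ∉ U → v' j = |wH j| := by
    intro j hj
    rw [hv']
    show (if j ∈ U then -|wH j| else |wH j|) = |wH j|
    exact if_neg hj
  have hv'pow : ∀ j, v' j ^ k = wH j ^ k := by
    intro j
    have habs : |wH j| ^ k = wH j ^ k := by
      rw [pow_abs, abs_of_nonneg (hk.pow_nonneg _)]
    by_cases hj : j ∈ U
    · rw [hv'_pos j hj, hk.neg_pow, habs]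
    · rw [hv'_neg j hj, habs]
  have hgv' : UHG.gs k v' = UHG.gs k wH := by
    unfold UHG.gs
    exact Finset.sum_congr rfl fun j _ => hv'pow j
  have hwzeroG₀ : ∀ e ∈ G₀.edges, ∀ j ∈ e, wH j = 0 := fun e he j hj =>
    hwH_not j (hG₀v e he j hj)
  have hv'zeroG₀ : ∀ e ∈ G₀.edges, ∀ j ∈ e, v' j = 0 := by
    intro e he j hj
    have hw0 := hwzeroG₀ e he j hj
    by_cases hjU : j ∈ U
    · rw [hv'_pos j hjU, hw0, abs_zero, neg_zero]
    · rw [hv'_neg j hjU, hw0, abs_zero]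
  have hQv'le : G.Qform v' ≤ G.Qform wH := by
    rw [hsplitQ v', hsplitQ wH]
    have hA : ∑ e ∈ G₀.edges, UHG.eterm k v' e = ∑ e ∈ G₀.edges, UHG.eterm k wH e := by
      refine Finset.sum_congr rfl fun e he => ?_
      rw [hzero_term _ _ (hne_edge he) (hv'zeroG₀ e he),
          hzero_term _ _ (hne_edge he) (hwzeroG₀ e he)]
    rw [hA]
    refine add_le_add (le_refl _) (Finset.sum_le_sum fun e he => ?_)
    have hsums : ∑ v ∈ e, v' v ^ k = ∑ v ∈ e, wH v ^ k :=
      Finset.sum_congr rfl fun v _ => hv'pow v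
    have hfac : ∀ j ∈ e, v' j = (if j ∈ U then (-1 : ℝ) else 1) * |wH j| := by
      intro j _
      by_cases hjU : j ∈ U
      · rw [hv'_pos j hjU, if_pos hjU]; ring
      · rw [hv'_neg j hjU, if_neg hjU]; ring
    have hsign : ∏ j ∈ e, (if j ∈ U then (-1 : ℝ) else 1) = -1 := by
      rw [Finset.prod_ite, Finset.prod_const, Finset.prod_const, one_pow, mul_one,
          Finset.filter_mem_eq_inter]
      exact Odd.neg_one_pow (hU e he)
    have hprod : ∏ j ∈ e, v' j = -|∏ j ∈ e, wH j| := by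
      rw [Finset.prod_congr rfl hfac, Finset.prod_mul_distrib, hsign,
          ← Finset.abs_prod]
      ring
    unfold UHG.eterm
    rw [hsums, hprod]
    have : -|∏ j ∈ e, wH j| ≤ ∏ j ∈ e, wH j := neg_abs_le _
    have hkpos : (0 : ℝ) ≤ (k : ℝ) := Nat.cast_nonneg k
    nlinarith
  have hQv'eq : G.Qform v' = m * UHG.gs k v' := by
    have h1 := hmF v'
    rw [hgv'] at h1 ⊢
    linarith [hQwHeq, hQv'le]
  have hveig : G.eigenEq m v' := UHG.eigen_of_min hk0 G m v' hmF hQv'eq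
  -- evaluate the eigen-equation of v' at u
  have hwu : wH u = 0 := hwH_not u hunotmem
  have hv'u : v' u = 0 := by
    by_cases hjU : u ∈ U
    · rw [hv'_pos u hjU, hwu, abs_zero, neg_zero]
    · rw [hv'_neg u hjU, hwu, abs_zero]
  have hu0 : (0 : ℝ) = ∑ e ∈ G.incEdges u, ∏ w ∈ e.erase u, v' w := by
    have := hveig u
    rwa [hv'u, zero_pow hk1, mul_zero] at this
  have hinc : G.incEdges u = G₀.incEdges u ∪ H.incEdges u := by
    unfold UHG.incEdges
    rw [hedges, Finset.filter_union]
  have hincdisj : Disjoint (G₀.incEdges u) (H.incEdges u) :=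
    Finset.disjoint_filter_filter hdisj
  rw [hinc, Finset.sum_union hincdisj] at hu0
  have hsum1 : ∑ e ∈ G₀.incEdges u, ∏ j ∈ e.erase u, v' j = 0 := by
    refine Finset.sum_eq_zero fun e he => ?_
    obtain ⟨heG, hue⟩ := Finset.mem_filter.mp he
    have hnee : (e.erase u).Nonempty := by
      rw [← Finset.card_pos, Finset.card_erase_of_mem hue, G₀.uniform e heG]
      omega
    obtain ⟨j, hj⟩ := hnee
    exact Finset.prod_eq_zero hj (hv'zeroG₀ e heG j (Finset.mem_of_mem_erase hj))
  -- each term over H-edges at u has the same sign σ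
  set σ : ℝ := if u ∈ U then 1 else -1 with hσ
  have hterm : ∀ e ∈ H.incEdges u,
      ∏ j ∈ e.erase u, v' j = σ * ∏ j ∈ e.erase u, |x j| := by
    intro e he
    obtain ⟨heH, hue⟩ := Finset.mem_filter.mp he
    have hfac : ∀ j ∈ e.erase u, v' j = (if j ∈ U then (-1 : ℝ) else 1) * |x j| := by
      intro j hj
      obtain ⟨hju, hje⟩ := Finset.mem_erase.mp hj
      have hwj : wH j = x j := hHvw e heH j hje
      by_cases hjU : j ∈ U
      · rw [hv'_pos j hjU, if_pos hjU, hwj]; ring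
      · rw [hv'_neg j hjU, if_neg hjU, hwj]; ring
    rw [Finset.prod_congr rfl hfac, Finset.prod_mul_distrib]
    congr 1
    rw [Finset.prod_ite, Finset.prod_const, Finset.prod_const, one_pow, mul_one,
        Finset.filter_mem_eq_inter, Finset.erase_inter]
    have hodd := hU e heH
    by_cases huU : u ∈ U
    · have huI : u ∈ e ∩ U := Finset.mem_inter.mpr ⟨hue, huU⟩
      rw [Finset.card_erase_of_mem huI, hσ, if_pos huU]
      refine Even.neg_one_pow ?_
      obtain ⟨n, hn⟩ := hodd
      exact ⟨n, by omega⟩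
    · have huI : u ∉ e ∩ U := fun h => huU (Finset.mem_inter.mp h).2
      rw [Finset.erase_eq_of_notMem huI, hσ, if_neg huU]
      exact Odd.neg_one_pow hodd
  have hσne : σ ≠ 0 := by
    rw [hσ]; by_cases huU : u ∈ U <;> simp [huU]
  have habs_nonneg : ∀ e ∈ H.incEdges u, (0 : ℝ) ≤ ∏ j ∈ e.erase u, |x j| :=
    fun e _ => Finset.prod_nonneg fun j _ => abs_nonneg _
  have hsum2 : ∑ e ∈ H.incEdges u, ∏ j ∈ e.erase u, |x j| = 0 := by
    have h1 : ∑ e ∈ H.incEdges u, ∏ j ∈ e.erase u, v' j = 0 := by linarith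
    rw [Finset.sum_congr rfl hterm, ← Finset.mul_sum] at h1
    exact (mul_eq_zero.mp h1).resolve_left hσne
  have hclaim2 : ∀ e ∈ H.incEdges u, (∏ w ∈ e.erase u, x w) = 0 := by
    intro e he
    have h1 : ∏ j ∈ e.erase u, |x j| = 0 :=
      (Finset.sum_eq_zero_iff_of_nonneg habs_nonneg).mp hsum2 e he
    have h2 : |∏ j ∈ e.erase u, x j| = 0 := by rw [Finset.abs_prod, h1]
    exact abs_eq_zero.mp h2
  refine ⟨?_, hclaim2⟩
  -- the eigen-equation of x at u together with claim 2
  have hxu0 : (0 : ℝ) = ∑ e ∈ G.incEdges u, ∏ w ∈ e.erase u, x w := by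
    have := hxeig u
    rwa [hxu, zero_pow hk1, mul_zero] at this
  rw [hinc, Finset.sum_union hincdisj] at hxu0
  have h2 : ∑ e ∈ H.incEdges u, ∏ w ∈ e.erase u, x w = 0 :=
    Finset.sum_eq_zero hclaim2
  linarith
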